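/- With θ the Coxeter transformation of the Tamari posets, for every tree T of degree n one has θ(T/Y) = (-1)ⁿ Y\θ⁻¹(T), where Y is the tree with one internal vertex. -/

import Mathlib

/-- Planar binary trees (full binary trees). -/
inductive PBT : Type
  | leaf : PBT
  | node : PBT → PBT → PBT
  deriving DecidableEq

namespace PBT

/-- Degree: number of internal (trivalent) vertices. -/
def deg : PBT → ℕ
  | leaf => 0
  | node l r => deg l + deg r + 1

/-- `graftL S T = S/T`: graft the root of `S` onto the leftmost leaf of `T`. -/
def graftL (S : PBT) : PBT → PBT
  | leaf => S
  | node l r => node (graftL S l) r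

/-- `graftR S T = S\T`: graft the root of `T` onto the rightmost leaf of `S`. -/
def graftR : PBT → PBT → PBT
  | leaf, T => T
  | node l r, T => node l (graftR r T)

/-- The unique tree with one internal vertex. -/
def Y : PBT := node leaf leaf

/-- One right rotation somewhere in the tree: the Tamari covering relation. -/
inductive rot : PBT → PBT → Prop
  | rotate (A B C : PBT) : rot (node (node A B) C) (node A (node B C))
  | left {S S' : PBT} (T : PBT) : rot S S' → rot (node S T) (node S' T)
  | right (S : PBT) {T T' : PBT} : rot T T' → rot (node S T) (node S T')

/-- The Tamari order: reflexive transitive closure of right rotations. -/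
def tamari : PBT → PBT → Prop := Relation.ReflTransGen rot

/-- Left-right reversal. -/
def rev : PBT → PBT
  | leaf => leaf
  | node l r => node (rev r) (rev l)

/-- The left comb of degree `n`. -/
def leftComb : ℕ → PBT
  | 0 => leaf
  | n + 1 => node (leftComb n) leaf

/-- The right comb of degree `n`. -/
def rightComb : ℕ → PBT
  | 0 => leaf
  | n + 1 => node leaf (rightComb n)

end PBT

/-- Trees of degree `n`. -/
abbrev PBTdeg (n : ℕ) := {T : PBT // T.deg = n}

open Classical in
/-- Incidence matrix of the Tamari order in degree `n`. -/
noncomputable def Lmat (n : ℕ) [Fintype (PBTdeg n)] : Matrix (PBTdeg n) (PBTdeg n) ℚ :=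
  Matrix.of fun v w => if PBT.tamari v.1 w.1 then 1 else 0

/-- Coxeter transformation `θ = -L (Lᵗ)⁻¹` of the Tamari poset of degree `n`. -/
noncomputable def thetaMat (n : ℕ) [Fintype (PBTdeg n)] : Matrix (PBTdeg n) (PBTdeg n) ℚ :=
  -(Lmat n * ((Lmat n).transpose)⁻¹)

/-- Basis vector of a tree `T` in the free vector space on trees of degree `n`. -/
def delta (n : ℕ) (T : PBT) : PBTdeg n → ℚ := fun U => if U.1 = T then 1 else 0

open Classical in
/-- Bilinear extension of the dendriform product `S * T = ∑_{S/T ≤ U ≤ S\T} U`. -/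
noncomputable def dprod {n₁ n₂ : ℕ} [Fintype (PBTdeg n₁)] [Fintype (PBTdeg n₂)]
    (f : PBTdeg n₁ → ℚ) (g : PBTdeg n₂ → ℚ) : PBTdeg (n₁ + n₂) → ℚ :=
  fun U => ∑ S₁ : PBTdeg n₁, ∑ S₂ : PBTdeg n₂,
    f S₁ * g S₂ *
      (if PBT.tamari (PBT.graftL S₁.1 S₂.1) U.1 ∧ PBT.tamari U.1 (PBT.graftR S₁.1 S₂.1)
        then 1 else 0)

open Classical in
/-- Bilinear extension of the left grafting `/`. -/
noncomputable def gprodL {n₁ n₂ : ℕ} [Fintype (PBTdeg n₁)] [Fintype (PBTdeg n₂)]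
    (f : PBTdeg n₁ → ℚ) (g : PBTdeg n₂ → ℚ) : PBTdeg (n₁ + n₂) → ℚ :=
  fun U => ∑ S₁ : PBTdeg n₁, ∑ S₂ : PBTdeg n₂,
    f S₁ * g S₂ * (if U.1 = PBT.graftL S₁.1 S₂.1 then 1 else 0)
open Classical in
/-- Linear extension of `f ↦ Y\f` from degree `n` to degree `n+1`. -/
noncomputable def Ygr (n : ℕ) [Fintype (PBTdeg n)] (f : PBTdeg n → ℚ) : PBTdeg (n + 1) → ℚ :=
  fun U => ∑ S : PBTdeg n, f S * (if U.1 = PBT.graftR PBT.Y S.1 then 1 else 0)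

namespace PBT

/-! ### Degree and basic order lemmas -/

theorem deg_eq_zero {t : PBT} (h : t.deg = 0) : t = leaf := by
  cases t with
  | leaf => rfl
  | node l r => simp [deg] at h

theorem deg_eq_one {t : PBT} (h : t.deg = 1) : t = Y := by
  cases t with
  | leaf => simp [deg] at h
  | node l r =>
    simp only [deg] at h
    have hl : l.deg = 0 := by omega
    have hr : r.deg = 0 := by omega
    rw [Y, deg_eq_zero hl, deg_eq_zero hr]

theorem rot_deg {a b : PBT} (h : rot a b) : a.deg = b.deg := by
  induction h with
  | rotate A B C => simp [deg]; omega
  | left T _ ih => simp [deg, ih]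
  | right S _ ih => simp [deg, ih]

theorem tamari_refl (a : PBT) : tamari a a := Relation.ReflTransGen.refl

theorem tamari_trans {a b c : PBT} (h1 : tamari a b) (h2 : tamari b c) : tamari a c :=
  Relation.ReflTransGen.trans h1 h2

theorem tamari_of_rot {a b : PBT} (h : rot a b) : tamari a b :=
  Relation.ReflTransGen.single h

theorem tamari_deg {a b : PBT} (h : tamari a b) : a.deg = b.deg := by
  induction h with
  | refl => rfl
  | tail _ h ih => exact ih.trans (rot_deg h)

theorem tamari_node_left {a b : PBT} (c : PBT) (h : tamari a b) :
    tamari (node a c) (node b c) :=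
  Relation.ReflTransGen.lift (fun x => node x c) (fun _ _ hr => rot.left c hr) _ _ h

theorem tamari_node_right (c : PBT) {a b : PBT} (h : tamari a b) :
    tamari (node c a) (node c b) :=
  Relation.ReflTransGen.lift (fun x => node c x) (fun _ _ hr => rot.right c hr) _ _ h

theorem tamari_node {a b c d : PBT} (h1 : tamari a b) (h2 : tamari c d) :
    tamari (node a c) (node b d) :=
  tamari_trans (tamari_node_left c h1) (tamari_node_right b h2)

theorem rot_not_leaf {a : PBT} (h : rot a leaf) : False := by cases h

theorem rot_of_leaf {a : PBT} (h : rot leaf a) : False := by cases h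

/-! ### Grafting lemmas -/

@[simp] theorem graftL_leaf (S : PBT) : graftL S leaf = S := rfl

@[simp] theorem graftR_leaf' (T : PBT) : graftR leaf T = T := rfl

theorem deg_graftL (S T : PBT) : (graftL S T).deg = S.deg + T.deg := by
  induction T with
  | leaf => simp [deg]
  | node l r ihl ihr => simp [graftL, deg, ihl]; omega

theorem deg_graftR (S T : PBT) : (graftR S T).deg = S.deg + T.deg := by
  induction S with
  | leaf => simp [deg]
  | node l r ihl ihr => simp [graftR, deg, ihr]; omega

theorem graftL_Y (T : PBT) : graftL T Y = node T leaf := rfl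

theorem graftR_Y (T : PBT) : graftR Y T = node leaf T := rfl

theorem rot_graftL_right (S : PBT) {T T' : PBT} (h : rot T T') :
    tamari (graftL S T) (graftL S T') := by
  induction h with
  | rotate A B C =>
    exact tamari_of_rot (rot.rotate (graftL S A) B C)
  | left T h ih =>
    exact tamari_node_left _ ih
  | right S' h ih =>
    exact tamari_node_right _ (tamari_of_rot h)

theorem graftL_mono {S S' T T' : PBT} (h1 : tamari S S') (h2 : tamari T T') :
    tamari (graftL S T) (graftL S' T') := by
  have part1 : tamari (graftL S T) (graftL S' T) := by
    clear h2
    induction T with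
    | leaf => exact h1
    | node l r ihl ihr => exact tamari_node_left _ ihl
  have part2 : tamari (graftL S' T) (graftL S' T') := by
    induction h2 with
    | refl => exact tamari_refl _
    | tail _ h ih => exact tamari_trans ih (rot_graftL_right S' h)
  exact tamari_trans part1 part2

theorem rot_graftR_left {S S' : PBT} (T : PBT) (h : rot S S') :
    tamari (graftR S T) (graftR S' T) := by
  induction h with
  | rotate A B C =>
    exact tamari_of_rot (rot.rotate A B (graftR C T))
  | left T' h ih =>
    exact tamari_node_left _ (tamari_of_rot h)
  | right S'' h ih =>
    exact tamari_node_right _ ih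

theorem graftR_right (S : PBT) {T T' : PBT} (h2 : tamari T T') :
    tamari (graftR S T) (graftR S T') := by
  induction S with
  | leaf => exact h2
  | node l r ihl ihr => exact tamari_node_right _ ihr

theorem graftR_mono {S S' T T' : PBT} (h1 : tamari S S') (h2 : tamari T T') :
    tamari (graftR S T) (graftR S' T') := by
  have part1 : tamari (graftR S T) (graftR S' T) := by
    induction h1 with
    | refl => exact tamari_refl _
    | tail _ h ih => exact tamari_trans ih (rot_graftR_left T h)
  exact tamari_trans part1 (graftR_right S' h2)

end PBT
namespace PBT

/-! ### The splitting function -/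

/-- Split a tree `U` into `(A, B)` with `deg A = a`, such that
`graftL A B ≤ U ≤ graftR A B` in the Tamari order. -/
def split : ℕ → PBT → PBT × PBT
  | _, leaf => (leaf, leaf)
  | a, node l r =>
    if a ≤ deg l then
      ((split a l).1, node (split a l).2 r)
    else
      (node l (split (a - deg l - 1) r).1, (split (a - deg l - 1) r).2)

theorem split_zero (U : PBT) : split 0 U = (leaf, U) := by
  induction U with
  | leaf => rfl
  | node l r ihl ihr => simp [split, ihl]

theorem split_all (U : PBT) : split U.deg U = (U, leaf) := by
  induction U with
  | leaf => rfl
  | node l r ihl ihr =>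
    have h : ¬ (node l r).deg ≤ deg l := by simp [deg]
    have h2 : (node l r).deg - deg l - 1 = deg r := by simp [deg]; omega
    simp [split, h, h2, ihr]

theorem split_deg {a : ℕ} {U : PBT} (h : a ≤ U.deg) :
    (split a U).1.deg = a ∧ (split a U).2.deg = U.deg - a := by
  induction U generalizing a with
  | leaf => simp [deg] at h; simp [split, h, deg]
  | node l r ihl ihr =>
    by_cases hc : a ≤ deg l
    · obtain ⟨h1, h2⟩ := ihl hc
      simp [split, hc, deg, h1, h2]
      omega
    · have hr : a - deg l - 1 ≤ deg r := by simp [deg] at h; omega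
      obtain ⟨h1, h2⟩ := ihr hr
      simp [split, hc, deg, h1, h2]
      omega

theorem split_graftL {a : ℕ} {S : PBT} (T : PBT) (h : S.deg = a) :
    split a (graftL S T) = (S, T) := by
  induction T with
  | leaf => rw [graftL_leaf, ← h, split_all]
  | node l r ihl ihr =>
    have hc : a ≤ deg (graftL S l) := by rw [deg_graftL]; omega
    simp [graftL, split, hc, ihl]

theorem split_graftR {a : ℕ} {S : PBT} (T : PBT) (h : S.deg = a) :
    split a (graftR S T) = (S, T) := by
  induction S generalizing a with
  | leaf => rw [graftR_leaf', ← h]; simp [deg, split_zero]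
  | node l r ihl ihr =>
    have hc : ¬ a ≤ deg l := by simp [deg] at h; omega
    have h2 : a - deg l - 1 = deg r := by simp [deg] at h; omega
    simp [graftR, split, deg, hc, h2, ihr rfl]

/-- Auxiliary: `node (X\Z) W ≤ X\(node Z W)`. -/
theorem aux_gr (X Z W : PBT) : tamari (node (graftR X Z) W) (graftR X (node Z W)) := by
  induction X with
  | leaf => exact tamari_refl _
  | node l r ihl ihr =>
    exact tamari_trans (tamari_of_rot (rot.rotate l (graftR r Z) W))
      (tamari_node_right l ihr)

/-- Auxiliary: `(node X Z)/W ≤ node X (Z/W)`. -/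
theorem aux_gl (X Z W : PBT) : tamari (graftL (node X Z) W) (node X (graftL Z W)) := by
  induction W with
  | leaf => exact tamari_refl _
  | node l r ihl ihr =>
    exact tamari_trans (tamari_node_left r ihl)
      (tamari_of_rot (rot.rotate X (graftL Z l) r))

/-- `U ≤ (split a U).1 \ (split a U).2`. -/
theorem split_le_graftR {a : ℕ} {U : PBT} (h : a ≤ U.deg) :
    tamari U (graftR (split a U).1 (split a U).2) := by
  induction U generalizing a with
  | leaf => simp [deg] at h; simp [h, split, tamari_refl]
  | node l r ihl ihr =>
    by_cases hc : a ≤ deg l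
    · simp only [split, hc, if_true]
      exact tamari_trans (tamari_node_left r (ihl hc))
        (aux_gr (split a l).1 (split a l).2 r)
    · have hr : a - deg l - 1 ≤ deg r := by simp [deg] at h; omega
      simp only [split, hc, if_false, graftR]
      exact tamari_node_right l (ihr hr)

/-- `(split a U).1 / (split a U).2 ≤ U`. -/
theorem graftL_split_le {a : ℕ} {U : PBT} (h : a ≤ U.deg) :
    tamari (graftL (split a U).1 (split a U).2) U := by
  induction U generalizing a with
  | leaf => simp [deg] at h; simp [h, split, tamari_refl]
  | node l r ihl ihr =>
    by_cases hc : a ≤ deg l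
    · simp only [split, hc, if_true, graftL]
      exact tamari_node_left r (ihl hc)
    · have hr : a - deg l - 1 ≤ deg r := by simp [deg] at h; omega
      simp only [split, hc, if_false]
      exact tamari_trans (aux_gl l (split (a - deg l - 1) r).1 (split (a - deg l - 1) r).2)
        (tamari_node_right l (ihr hr))

/-- Monotonicity of `split` along a rotation. -/
theorem split_mono {U V : PBT} (h : rot U V) (a : ℕ) (ha : a ≤ U.deg) :
    tamari (split a U).1 (split a V).1 ∧ tamari (split a U).2 (split a V).2 := by
  induction h generalizing a with
  | rotate A B C =>
    have hd : deg (node A B) = deg A + deg B + 1 := rfl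
    by_cases h1 : a ≤ deg A
    · have h2 : a ≤ deg (node A B) := by rw [hd]; omega
      simp only [split, h1, h2, if_true]
      exact ⟨tamari_refl _, tamari_of_rot (rot.rotate (split a A).2 B C)⟩
    · by_cases h2 : a ≤ deg (node A B)
      · have h3 : a - deg A - 1 ≤ deg B := by omega
        have h4 : ¬ a - deg A - 1 ≤ deg B → False := fun h => h h3
        simp only [split, h1, h2, if_true, if_false]
        have h5 : a - deg A - 1 ≤ deg B := h3
        simp only [split, h5, if_true]
        exact ⟨tamari_refl _, tamari_refl _⟩
      · have h3 : ¬ a - deg A - 1 ≤ deg B := by omega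
        have h6 : a - deg A - 1 - deg B - 1 = a - deg (node A B) - 1 := by
          rw [hd]; omega
        simp only [split, h1, h2, h3, if_false, if_true]
        rw [h6]
        exact ⟨tamari_of_rot (rot.rotate A B _), tamari_refl _⟩
  | left T hST ih =>
    rename_i S S'
    have hdeg : S.deg = S'.deg := rot_deg hST
    by_cases h1 : a ≤ deg S
    · have h1' : a ≤ deg S' := by omega
      simp only [split, h1, h1', if_true]
      have hS : deg S ≤ deg (node S T) := by simp [deg]; omega
      obtain ⟨c1, c2⟩ := ih a h1
      exact ⟨c1, tamari_node_left T c2⟩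
    · have h1' : ¬ a ≤ deg S' := by omega
      simp only [split, h1, h1', if_false, hdeg]
      exact ⟨tamari_node_left _ (tamari_of_rot hST), tamari_refl _⟩
  | right S hTT ih =>
    rename_i T T'
    by_cases h1 : a ≤ deg S
    · simp only [split, h1, if_true]
      exact ⟨tamari_refl _, tamari_node_right _ (tamari_of_rot hTT)⟩
    · simp only [split, h1, if_false]
      have hr : a - deg S - 1 ≤ deg T := by
        simp only [deg] at ha; omega
      obtain ⟨c1, c2⟩ := ih _ hr
      exact ⟨tamari_node_right S c1, c2⟩

end PBT
namespace PBT

/-! ### Characterizations of intervals -/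

theorem M1 {S T U : PBT} (hU : U.deg = S.deg + T.deg) :
    tamari U (graftR S T) ↔
      (tamari (split S.deg U).1 S ∧ tamari (split S.deg U).2 T) := by
  constructor
  · intro h
    clear hU
    induction h using Relation.ReflTransGen.head_induction_on with
    | refl =>
      rw [split_graftR T rfl]
      exact ⟨tamari_refl _, tamari_refl _⟩
    | head h' h ih =>
      rename_i x c
      have hc : c.deg = S.deg + T.deg := by
        rw [tamari_deg h, deg_graftR]
      have hx : S.deg ≤ x.deg := by rw [rot_deg h', hc]; omega
      obtain ⟨m1, m2⟩ := split_mono h' S.deg hx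
      exact ⟨tamari_trans m1 ih.1, tamari_trans m2 ih.2⟩
  · rintro ⟨h1, h2⟩
    have ha : S.deg ≤ U.deg := by omega
    exact tamari_trans (split_le_graftR ha) (graftR_mono h1 h2)

theorem M2 {S T U : PBT} (hU : U.deg = S.deg + T.deg) :
    tamari (graftL S T) U ↔
      (tamari S (split S.deg U).1 ∧ tamari T (split S.deg U).2) := by
  constructor
  · intro h
    clear hU
    induction h with
    | refl =>
      rw [split_graftL T rfl]
      exact ⟨tamari_refl _, tamari_refl _⟩
    | tail hbc h' ih =>
      rename_i b c
      have hb : b.deg = S.deg + T.deg := by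
        rw [← tamari_deg hbc, deg_graftL]
      have hxb : S.deg ≤ b.deg := by omega
      obtain ⟨m1, m2⟩ := split_mono h' S.deg hxb
      exact ⟨tamari_trans ih.1 m1, tamari_trans ih.2 m2⟩
  · rintro ⟨h1, h2⟩
    have ha : S.deg ≤ U.deg := by omega
    exact tamari_trans (graftL_mono h1 h2) (graftL_split_le ha)

theorem rot_graftL_down {V₁ V₂ U : PBT} (h : rot U (graftL V₁ V₂)) :
    ∃ U₁ U₂, U = graftL U₁ U₂ ∧ U₁.deg = V₁.deg ∧ tamari U₁ V₁ ∧ tamari U₂ V₂ := by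
  induction V₂ generalizing U with
  | leaf =>
    exact ⟨U, leaf, rfl, rot_deg h, tamari_of_rot h, tamari_refl _⟩
  | node l r ihl ihr =>
    rw [show graftL V₁ (node l r) = node (graftL V₁ l) r from rfl] at h
    generalize hL : graftL V₁ l = W0 at h
    generalize hN : node W0 r = N at h
    cases h with
    | rotate A B C =>
      injection hN with h1 h2
      subst h1
      refine ⟨V₁, node (node l B) C, ?_, rfl, tamari_refl _, ?_⟩
      · rw [← hL]; rfl
      · rw [h2]
        exact tamari_of_rot (rot.rotate l B C)
    | left T hS =>
      rename_i S₀ S₀'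
      injection hN with h1 h2
      subst h1
      subst h2
      rw [← hL] at hS
      obtain ⟨U₁, l', hdec, hdeg, hU1, hl'⟩ := ihl hS
      refine ⟨U₁, node l' r, ?_, hdeg, hU1, ?_⟩
      · rw [hdec]; rfl
      · exact tamari_node_left _ hl'
    | right S₀ hT =>
      rename_i T₀ T₀'
      injection hN with h1 h2
      subst h1
      rw [← hL]
      refine ⟨V₁, node l T₀, rfl, rfl, tamari_refl _, ?_⟩
      rw [h2]
      exact tamari_node_right l (tamari_of_rot hT)

theorem G1 {S T U : PBT} (h : tamari U (graftL S T)) :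
    ∃ U₁ U₂, U = graftL U₁ U₂ ∧ U₁.deg = S.deg ∧ tamari U₁ S ∧ tamari U₂ T := by
  induction h using Relation.ReflTransGen.head_induction_on with
  | refl => exact ⟨S, T, rfl, rfl, tamari_refl _, tamari_refl _⟩
  | head h' h ih =>
    obtain ⟨c₁, c₂, hdec, hdeg, hc1, hc2⟩ := ih
    rw [hdec] at h'
    obtain ⟨U₁, U₂, hdec', hdeg', hU1, hU2⟩ := rot_graftL_down h'
    exact ⟨U₁, U₂, hdec', by omega, tamari_trans hU1 hc1, tamari_trans hU2 hc2⟩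

theorem rot_graftR_up {V₁ V₂ U : PBT} (h : rot (graftR V₁ V₂) U) :
    ∃ U₁ U₂, U = graftR U₁ U₂ ∧ U₁.deg = V₁.deg ∧ tamari V₁ U₁ ∧ tamari V₂ U₂ := by
  induction V₁ generalizing U with
  | leaf =>
    exact ⟨leaf, U, rfl, rfl, tamari_refl _, tamari_of_rot h⟩
  | node X Z ihX ihZ =>
    rw [show graftR (node X Z) V₂ = node X (graftR Z V₂) from rfl] at h
    generalize hG : graftR Z V₂ = GR at h
    cases h with
    | rotate A B C =>
      -- here X = node A B, GR = C, U = node A (node B C)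
      refine ⟨node A (node B Z), V₂, ?_, ?_, ?_, tamari_refl _⟩
      · show _ = node A (node B (graftR Z V₂))
        rw [hG]
      · simp [deg]; omega
      · exact tamari_of_rot (rot.rotate A B Z)
    | left T hS =>
      rename_i S₀'
      refine ⟨node S₀' Z, V₂, ?_, ?_, ?_, tamari_refl _⟩
      · show _ = node S₀' (graftR Z V₂)
        rw [hG]
      · simp [deg, rot_deg hS]
      · exact tamari_node_left Z (tamari_of_rot hS)
    | right S₀ hT =>
      rename_i T₀'
      rw [← hG] at hT
      obtain ⟨Z', V₂', hdec, hdeg, hZ, hV⟩ := ihZ hT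
      refine ⟨node X Z', V₂', ?_, ?_, ?_, hV⟩
      · rw [hdec]; rfl
      · simp [deg, hdeg]
      · exact tamari_node_right X hZ

theorem G1' {S T U : PBT} (h : tamari (graftR S T) U) :
    ∃ U₁ U₂, U = graftR U₁ U₂ ∧ U₁.deg = S.deg ∧ tamari S U₁ ∧ tamari T U₂ := by
  induction h with
  | refl => exact ⟨S, T, rfl, rfl, tamari_refl _, tamari_refl _⟩
  | tail hbc h' ih =>
    obtain ⟨b₁, b₂, hdec, hdeg, hb1, hb2⟩ := ih
    rw [hdec] at h'
    obtain ⟨U₁, U₂, hdec', hdeg', hU1, hU2⟩ := rot_graftR_up h'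
    exact ⟨U₁, U₂, hdec', by omega, tamari_trans hb1 hU1, tamari_trans hb2 hU2⟩

end PBT
namespace PBT

theorem cor1 {T U : PBT} :
    tamari U (node T leaf) ↔ ∃ T', U = node T' leaf ∧ tamari T' T := by
  constructor
  · intro h
    obtain ⟨U₁, U₂, hdec, hdeg, h1, h2⟩ := G1 (S := T) (T := Y) h
    have hd2 : U₂.deg = 1 := by
      rw [tamari_deg h2]; rfl
    rw [deg_eq_one hd2] at hdec
    exact ⟨U₁, hdec, h1⟩
  · rintro ⟨T', rfl, h⟩
    exact graftL_mono (T := Y) h (tamari_refl _)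

theorem cor3 {T U : PBT} :
    tamari (node leaf T) U ↔ ∃ T', U = node leaf T' ∧ tamari T T' := by
  constructor
  · intro h
    obtain ⟨U₁, U₂, hdec, hdeg, h1, h2⟩ := G1' (S := Y) (T := T) h
    have hd1 : U₁.deg = 1 := by rw [← tamari_deg h1]; rfl
    rw [deg_eq_one hd1] at hdec
    exact ⟨U₂, hdec, h2⟩
  · rintro ⟨T', rfl, h⟩
    exact graftR_mono (S := Y) (tamari_refl _) h

theorem lemE {A B U : PBT} (hU : U.deg = A.deg + B.deg + 2) :
    tamari U (node (node A B) leaf) ↔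
      (tamari (split (A.deg + 1) U).1 (node A leaf) ∧
       tamari (split (A.deg + 1) U).2 (node B leaf) ∧
       U ≠ graftR (split (A.deg + 1) U).1 (split (A.deg + 1) U).2) := by
  have hS : (node A leaf).deg = A.deg + 1 := by simp [deg]
  have hT : (node B leaf).deg = B.deg + 1 := by simp [deg]
  have hUd : U.deg = (node A leaf).deg + (node B leaf).deg := by rw [hS, hT]; omega
  have ha : A.deg + 1 ≤ U.deg := by omega
  constructor
  · intro h
    have h2 : tamari U (graftR (node A leaf) (node B leaf)) := by
      refine tamari_trans h ?_
      exact tamari_of_rot (rot.rotate A B leaf)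
    rw [M1 hUd] at h2
    rw [hS] at h2
    refine ⟨h2.1, h2.2, ?_⟩
    obtain ⟨T', hT', _⟩ := cor1.mp h
    have hd1 : (split (A.deg + 1) U).1.deg = A.deg + 1 := (split_deg ha).1
    intro hcon
    rcases hl : (split (A.deg + 1) U).1 with _ | ⟨x, z⟩
    · rw [hl] at hd1; simp [deg] at hd1
    · rw [hl] at hcon
      have hd2 : (split (A.deg + 1) U).2.deg = U.deg - (A.deg + 1) := (split_deg ha).2
      have hgr : node T' leaf = node x (graftR z (split (A.deg + 1) U).2) :=
        hT'.symm.trans hcon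
      have hdgr : (graftR z (split (A.deg + 1) U).2).deg
          = z.deg + (split (A.deg + 1) U).2.deg := deg_graftR _ _
      injection hgr with e1 e2
      have : (graftR z (split (A.deg + 1) U).2).deg = 0 := by rw [← e2]; rfl
      omega
  · rintro ⟨h1, h2, hne⟩
    obtain ⟨LA, hLA, hLA2⟩ := cor1.mp h1
    obtain ⟨LB, hLB, hLB2⟩ := cor1.mp h2
    rcases U with _ | ⟨U₁, U₂⟩
    · simp [deg] at hU
    · have hdn : (node U₁ U₂).deg = U₁.deg + U₂.deg + 1 := rfl
      by_cases hc : A.deg + 1 ≤ U₁.deg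
      · have hsp : split (A.deg + 1) (node U₁ U₂)
            = ((split (A.deg + 1) U₁).1, node (split (A.deg + 1) U₁).2 U₂) := by
          simp [split, hc]
        rw [hsp] at hLA hLB
        injection hLB with e1 e2
        have hle : tamari U₁ (graftR (split (A.deg + 1) U₁).1 (split (A.deg + 1) U₁).2) :=
          split_le_graftR hc
        rw [hLA, e1] at hle
        have hle2 : tamari U₁ (node LA LB) := hle
        subst e2
        refine cor1.mpr ⟨U₁, rfl, ?_⟩
        exact tamari_trans hle2 (tamari_node hLA2 hLB2)
      · have ha' : A.deg + 1 - U₁.deg - 1 ≤ U₂.deg := by omega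
        have hsp : split (A.deg + 1) (node U₁ U₂)
            = (node U₁ (split (A.deg + 1 - U₁.deg - 1) U₂).1,
               (split (A.deg + 1 - U₁.deg - 1) U₂).2) := by
          simp [split, hc]
        rw [hsp] at hLA hLB hne
        injection hLA with e1 e2
        have hz : (split (A.deg + 1 - U₁.deg - 1) U₂).1.deg = A.deg + 1 - U₁.deg - 1 :=
          (split_deg ha').1
        rw [e2] at hz
        have hz0 : A.deg + 1 - U₁.deg - 1 = 0 := by
          simpa [deg] using hz.symm
        rw [hz0, split_zero] at hLB hne
        exfalso
        apply hne
        rw [e1]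
        rfl

theorem lemE' {A B U : PBT} (hU : U.deg = A.deg + B.deg + 2) :
    tamari (node leaf (node A B)) U ↔
      (tamari (node leaf A) (split (A.deg + 1) U).1 ∧
       tamari (node leaf B) (split (A.deg + 1) U).2 ∧
       U ≠ graftL (split (A.deg + 1) U).1 (split (A.deg + 1) U).2) := by
  have hS : (node leaf A).deg = A.deg + 1 := by simp [deg]
  have hT : (node leaf B).deg = B.deg + 1 := by simp [deg]
  have hUd : U.deg = (node leaf A).deg + (node leaf B).deg := by rw [hS, hT]; omega
  have ha : A.deg + 1 ≤ U.deg := by omega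
  constructor
  · intro h
    have h2 : tamari (graftL (node leaf A) (node leaf B)) U := by
      refine tamari_trans ?_ h
      exact tamari_of_rot (rot.rotate leaf A B)
    rw [M2 hUd] at h2
    rw [hS] at h2
    refine ⟨h2.1, h2.2, ?_⟩
    obtain ⟨T', hT', _⟩ := cor3.mp h
    have hd1 : (split (A.deg + 1) U).1.deg = A.deg + 1 := (split_deg ha).1
    have hd2 : (split (A.deg + 1) U).2.deg = U.deg - (A.deg + 1) := (split_deg ha).2
    intro hcon
    rcases hr : (split (A.deg + 1) U).2 with _ | ⟨x, z⟩
    · rw [hr] at hd2; simp [deg] at hd2; omega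
    · rw [hr] at hcon
      have hgr : node leaf T' = node (graftL (split (A.deg + 1) U).1 x) z :=
        hT'.symm.trans hcon
      injection hgr with e1 e2
      have : (graftL (split (A.deg + 1) U).1 x).deg = 0 := by rw [← e1]; rfl
      rw [deg_graftL] at this
      omega
  · rintro ⟨h1, h2, hne⟩
    obtain ⟨RA, hRA, hRA2⟩ := cor3.mp h1
    obtain ⟨RB, hRB, hRB2⟩ := cor3.mp h2
    rcases U with _ | ⟨U₁, U₂⟩
    · simp [deg] at hU
    · by_cases hc : A.deg + 1 ≤ U₁.deg
      · have hsp : split (A.deg + 1) (node U₁ U₂)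
            = ((split (A.deg + 1) U₁).1, node (split (A.deg + 1) U₁).2 U₂) := by
          simp [split, hc]
        rw [hsp] at hRA hRB hne
        injection hRB with e1 e2
        have hz : (split (A.deg + 1) U₁).2.deg = U₁.deg - (A.deg + 1) := (split_deg hc).2
        rw [e1] at hz
        have hz0 : U₁.deg = A.deg + 1 := by
          simp [deg] at hz; omega
        have hall : split (A.deg + 1) U₁ = (U₁, leaf) := by
          rw [← hz0, split_all]
        rw [hall] at hRA
        simp only at hRA
        exfalso
        apply hne
        rw [hall]
        simp only
        rw [hRA, e2]
        rfl
      · have ha' : A.deg + 1 - U₁.deg - 1 ≤ U₂.deg := by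
          have : (node U₁ U₂).deg = U₁.deg + U₂.deg + 1 := rfl
          omega
        have hsp : split (A.deg + 1) (node U₁ U₂)
            = (node U₁ (split (A.deg + 1 - U₁.deg - 1) U₂).1,
               (split (A.deg + 1 - U₁.deg - 1) U₂).2) := by
          simp [split, hc]
        rw [hsp] at hRA hRB
        injection hRA with e1 e2
        have hle : tamari (graftL (split (A.deg + 1 - U₁.deg - 1) U₂).1
            (split (A.deg + 1 - U₁.deg - 1) U₂).2) U₂ := graftL_split_le ha'
        rw [e2, hRB] at hle
        have hle2 : tamari (node RA RB) U₂ := hle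
        subst e1
        refine cor3.mpr ⟨U₂, rfl, ?_⟩
        exact tamari_trans (tamari_node hRA2 hRB2) hle2

end PBT
namespace PBT

/-! ### The finset of trees of a given degree -/

def allTrees : ℕ → Finset PBT
  | 0 => {leaf}
  | n + 1 =>
    (Finset.range (n + 1)).attach.biUnion fun i =>
      ((allTrees i.1) ×ˢ (allTrees (n - i.1))).image fun p => node p.1 p.2
  decreasing_by
    · have := Finset.mem_range.mp i.2; omega
    · have := Finset.mem_range.mp i.2; omega

theorem mem_allTrees : ∀ {n : ℕ} {T : PBT}, T ∈ allTrees n ↔ T.deg = n := by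
  intro n
  induction n using Nat.strong_induction_on with
  | _ n ih =>
    intro T
    match n with
    | 0 =>
      simp only [allTrees, Finset.mem_singleton]
      constructor
      · rintro rfl; rfl
      · exact deg_eq_zero
    | n + 1 =>
      rw [allTrees]
      simp only [Finset.mem_biUnion, Finset.mem_attach, Finset.mem_image, Finset.mem_product,
        true_and]
      constructor
      · rintro ⟨⟨i, hi⟩, ⟨l, r⟩, ⟨hl, hr⟩, rfl⟩
        have hi' : i < n + 1 := Finset.mem_range.mp hi
        have hld : l.deg = i := (ih i (by omega)).mp hl
        have hrd : r.deg = n - i := (ih (n - i) (by omega)).mp hr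
        simp only [deg]
        omega
      · intro hT
        rcases T with _ | ⟨l, r⟩
        · simp [deg] at hT
        · have hd : l.deg + r.deg + 1 = n + 1 := hT
          refine ⟨⟨l.deg, Finset.mem_range.mpr (by omega)⟩, ⟨l, r⟩, ⟨?_, ?_⟩, rfl⟩
          · exact (ih l.deg (by omega)).mpr rfl
          · exact (ih (n - l.deg) (by omega)).mpr (show r.deg = n - l.deg by omega)

/-! ### The key vectors -/

noncomputable def kk : PBT → PBT → ℚ
  | leaf, W => if W = node leaf leaf then 1 else 0
  | node A B, W =>
    (if graftL (split (A.deg + 1) W).1 (split (A.deg + 1) W).2 = W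
      then kk A (split (A.deg + 1) W).1 * kk B (split (A.deg + 1) W).2 else 0)
    - (if graftR (split (A.deg + 1) W).1 (split (A.deg + 1) W).2 = W
      then kk A (split (A.deg + 1) W).1 * kk B (split (A.deg + 1) W).2 else 0)

open Classical in
/-- Reindexing a sum over decomposable trees as a sum over pairs. -/
theorem sum_decomp {a b : ℕ} (gr : PBT → PBT → PBT)
    (hsp : ∀ W₁ W₂, W₁.deg = a → split a (gr W₁ W₂) = (W₁, W₂))
    (hdg : ∀ W₁ W₂, (gr W₁ W₂).deg = W₁.deg + W₂.deg)
    (F : PBT × PBT → ℚ) (C : PBT → Prop) :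
    ∑ W ∈ allTrees (a + b),
      (if C W then (if gr (split a W).1 (split a W).2 = W then F (split a W) else 0) else 0)
    = ∑ p ∈ allTrees a ×ˢ allTrees b, (if C (gr p.1 p.2) then F p else 0) := by
  refine Finset.sum_bij_ne_zero (fun W _ _ => split a W) ?_ ?_ ?_ ?_
  · intro W h₁ h₂
    have hW : W.deg = a + b := mem_allTrees.mp h₁
    have ha : a ≤ W.deg := by omega
    have hguard : gr (split a W).1 (split a W).2 = W := by
      by_contra hg
      simp [hg] at h₂
    rw [Finset.mem_product]
    exact ⟨mem_allTrees.mpr (split_deg ha).1,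
      mem_allTrees.mpr (by rw [(split_deg ha).2, hW]; omega)⟩
  · intro W₁ hm1 hn1 W₂ hm2 hn2 heq
    have hg1 : gr (split a W₁).1 (split a W₁).2 = W₁ := by
      by_contra hg; simp [hg] at hn1
    have hg2 : gr (split a W₂).1 (split a W₂).2 = W₂ := by
      by_contra hg; simp [hg] at hn2
    rw [← hg1, ← hg2, heq]
  · intro p hp hgp
    rw [Finset.mem_product] at hp
    have h1 : p.1.deg = a := mem_allTrees.mp hp.1
    have h2 : p.2.deg = b := mem_allTrees.mp hp.2
    have hsp' : split a (gr p.1 p.2) = p := by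
      rw [hsp p.1 p.2 h1]
    refine ⟨gr p.1 p.2, mem_allTrees.mpr (by rw [hdg, h1, h2]), ?_, hsp'⟩
    rw [hsp']
    simpa using hgp
  · intro W h₁ h₂
    have hguard : gr (split a W).1 (split a W).2 = W := by
      by_contra hg
      simp [hg] at h₂
    rw [hguard]
    simp [hguard]

end PBT
namespace PBT

theorem corR {W₁ W₂ U : PBT} (hd : U.deg = W₁.deg + W₂.deg) :
    tamari (graftR W₁ W₂) U ↔
      (graftR (split W₁.deg U).1 (split W₁.deg U).2 = U ∧
       tamari W₁ (split W₁.deg U).1 ∧ tamari W₂ (split W₁.deg U).2) := by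
  constructor
  · intro h
    obtain ⟨U₁, U₂, rfl, hdeg, h1, h2⟩ := G1' h
    rw [split_graftR U₂ hdeg]
    exact ⟨rfl, h1, h2⟩
  · rintro ⟨he, h1, h2⟩
    rw [← he]
    exact graftR_mono h1 h2

theorem corL {W₁ W₂ U : PBT} (hd : U.deg = W₁.deg + W₂.deg) :
    tamari U (graftL W₁ W₂) ↔
      (graftL (split W₁.deg U).1 (split W₁.deg U).2 = U ∧
       tamari (split W₁.deg U).1 W₁ ∧ tamari (split W₁.deg U).2 W₂) := by
  constructor
  · intro h
    obtain ⟨U₁, U₂, rfl, hdeg, h1, h2⟩ := G1 h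
    rw [split_graftL U₂ hdeg]
    exact ⟨rfl, h1, h2⟩
  · rintro ⟨he, h1, h2⟩
    rw [← he]
    exact graftL_mono h1 h2

open Classical in
private theorem ite_sub_ite (c : Prop) [Decidable c] (x y : ℚ) :
    (if c then x - y else 0) = (if c then x else 0) - (if c then y else 0) := by
  split <;> simp

open Classical in
theorem C1 : ∀ (T U : PBT), U.deg = T.deg + 1 →
    (∑ W ∈ allTrees (T.deg + 1), (if tamari W U then kk T W else 0))
      = (if tamari U (node T leaf) then 1 else 0) := by
  intro T
  induction T with
  | leaf =>
    intro U hU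
    have hUY : U = Y := deg_eq_one hU
    subst hUY
    have hsing : allTrees (deg leaf + 1) = {Y} := by
      apply Finset.eq_singleton_iff_unique_mem.mpr
      refine ⟨mem_allTrees.mpr rfl, fun x hx => ?_⟩
      have := mem_allTrees.mp hx
      exact deg_eq_one (by simpa [deg] using this)
    rw [hsing, Finset.sum_singleton]
    simp [kk, tamari_refl, Y]
  | node A B ihA ihB =>
    intro U hU
    have hdT : (node A B).deg = A.deg + B.deg + 1 := rfl
    have haU : A.deg + 1 ≤ U.deg := by omega
    have hsd := split_deg haU
    set ℓ := (split (A.deg + 1) U).1 with hℓ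
    set r := (split (A.deg + 1) U).2 with hr
    have hℓd : ℓ.deg = A.deg + 1 := hsd.1
    have hrd : r.deg = B.deg + 1 := by rw [hr, hsd.2]; omega
    have hab : (node A B).deg + 1 = (A.deg + 1) + (B.deg + 1) := by omega
    -- expand kk and split the sum into two parts
    have expand : ∀ W, (if tamari W U then kk (node A B) W else 0)
        = (if tamari W U then
            (if graftL (split (A.deg + 1) W).1 (split (A.deg + 1) W).2 = W
              then kk A (split (A.deg + 1) W).1 * kk B (split (A.deg + 1) W).2 else 0) else 0)
        - (if tamari W U then
            (if graftR (split (A.deg + 1) W).1 (split (A.deg + 1) W).2 = W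
              then kk A (split (A.deg + 1) W).1 * kk B (split (A.deg + 1) W).2 else 0) else 0) := by
      intro W
      rw [show kk (node A B) W
          = (if graftL (split (A.deg + 1) W).1 (split (A.deg + 1) W).2 = W
              then kk A (split (A.deg + 1) W).1 * kk B (split (A.deg + 1) W).2 else 0)
          - (if graftR (split (A.deg + 1) W).1 (split (A.deg + 1) W).2 = W
              then kk A (split (A.deg + 1) W).1 * kk B (split (A.deg + 1) W).2 else 0)
        from by rw [kk]]
      rw [ite_sub_ite]
    rw [hab]
    calc ∑ W ∈ allTrees ((A.deg + 1) + (B.deg + 1)), (if tamari W U then kk (node A B) W else 0)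
        = ∑ W ∈ allTrees ((A.deg + 1) + (B.deg + 1)),
            ((if tamari W U then
              (if graftL (split (A.deg + 1) W).1 (split (A.deg + 1) W).2 = W
                then kk A (split (A.deg + 1) W).1 * kk B (split (A.deg + 1) W).2 else 0) else 0)
            - (if tamari W U then
              (if graftR (split (A.deg + 1) W).1 (split (A.deg + 1) W).2 = W
                then kk A (split (A.deg + 1) W).1 * kk B (split (A.deg + 1) W).2 else 0) else 0)) := by
          exact Finset.sum_congr rfl fun W _ => expand W
      _ = (∑ p ∈ allTrees (A.deg + 1) ×ˢ allTrees (B.deg + 1),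
            (if tamari (graftL p.1 p.2) U then kk A p.1 * kk B p.2 else 0))
          - (∑ p ∈ allTrees (A.deg + 1) ×ˢ allTrees (B.deg + 1),
            (if tamari (graftR p.1 p.2) U then kk A p.1 * kk B p.2 else 0)) := by
          rw [Finset.sum_sub_distrib]
          congr 1
          · exact sum_decomp graftL (fun W₁ W₂ h => split_graftL W₂ h) deg_graftL
              (fun p => kk A p.1 * kk B p.2) (fun W => tamari W U)
          · exact sum_decomp graftR (fun W₁ W₂ h => split_graftR W₂ h) deg_graftR
              (fun p => kk A p.1 * kk B p.2) (fun W => tamari W U)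
      _ = (if tamari U (node (node A B) leaf) then 1 else 0) := ?_
    -- Now evaluate the two double sums.
    have hsumL : (∑ p ∈ allTrees (A.deg + 1) ×ˢ allTrees (B.deg + 1),
          (if tamari (graftL p.1 p.2) U then kk A p.1 * kk B p.2 else 0))
        = (if tamari ℓ (node A leaf) then 1 else 0) * (if tamari r (node B leaf) then 1 else 0) := by
      rw [← ihA ℓ hℓd, ← ihB r hrd, Finset.sum_mul_sum, ← Finset.sum_product']
      refine Finset.sum_congr rfl fun p hp => ?_
      rw [Finset.mem_product] at hp
      have h1 : p.1.deg = A.deg + 1 := mem_allTrees.mp hp.1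
      have h2 : p.2.deg = B.deg + 1 := mem_allTrees.mp hp.2
      have hM := M2 (S := p.1) (T := p.2) (U := U) (by omega)
      rw [h1] at hM
      rw [← hℓ, ← hr] at hM
      rw [if_congr hM rfl rfl]
      by_cases c1 : tamari p.1 ℓ <;> by_cases c2 : tamari p.2 r <;>
        simp [c1, c2, mul_comm, mul_left_comm, mul_assoc]
    have hsumR : (∑ p ∈ allTrees (A.deg + 1) ×ˢ allTrees (B.deg + 1),
          (if tamari (graftR p.1 p.2) U then kk A p.1 * kk B p.2 else 0))
        = (if graftR ℓ r = U then 1 else 0) *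
          ((if tamari ℓ (node A leaf) then 1 else 0) * (if tamari r (node B leaf) then 1 else 0)) := by
      by_cases hE : graftR ℓ r = U
      · rw [if_pos hE, one_mul]
        rw [← ihA ℓ hℓd, ← ihB r hrd, Finset.sum_mul_sum, ← Finset.sum_product']
        refine Finset.sum_congr rfl fun p hp => ?_
        rw [Finset.mem_product] at hp
        have h1 : p.1.deg = A.deg + 1 := mem_allTrees.mp hp.1
        have h2 : p.2.deg = B.deg + 1 := mem_allTrees.mp hp.2
        have hM := corR (W₁ := p.1) (W₂ := p.2) (U := U) (by omega)
        rw [h1] at hM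
        rw [← hℓ, ← hr] at hM
        have hM2 : tamari (graftR p.1 p.2) U ↔ (tamari p.1 ℓ ∧ tamari p.2 r) := by
          rw [hM]
          simp [hE]
        rw [if_congr hM2 rfl rfl]
        by_cases c1 : tamari p.1 ℓ <;> by_cases c2 : tamari p.2 r <;>
          simp [c1, c2, mul_comm, mul_left_comm, mul_assoc]
      · rw [if_neg hE, zero_mul]
        refine Finset.sum_eq_zero fun p hp => ?_
        rw [Finset.mem_product] at hp
        have h1 : p.1.deg = A.deg + 1 := mem_allTrees.mp hp.1
        have h2 : p.2.deg = B.deg + 1 := mem_allTrees.mp hp.2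
        have hM := corR (W₁ := p.1) (W₂ := p.2) (U := U) (by omega)
        rw [h1] at hM
        rw [← hℓ, ← hr] at hM
        rw [if_neg]
        rw [hM]
        tauto
    rw [hsumL, hsumR]
    have hE := lemE (A := A) (B := B) (U := U) (by omega)
    by_cases hcond : tamari U (node (node A B) leaf)
    · obtain ⟨d1, d2, d3⟩ := hE.mp hcond
      rw [← hℓ] at d1
      rw [← hr] at d2
      rw [← hℓ, ← hr] at d3
      have hc3 : ¬ (graftR ℓ r = U) := fun hcc => d3 hcc.symm
      rw [if_pos hcond, if_pos d1, if_pos d2, if_neg hc3]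
      norm_num
    · rw [if_neg hcond]
      by_cases c1 : tamari ℓ (node A leaf)
      · by_cases c2 : tamari r (node B leaf)
        · have hc3 : graftR ℓ r = U := by
            by_contra hc
            refine hcond (hE.mpr ⟨?_, ?_, fun hcc => hc hcc.symm⟩)
            · rw [← hℓ]; exact c1
            · rw [← hr]; exact c2
          rw [if_pos c1, if_pos c2, if_pos hc3]
          norm_num
        · simp [c1, c2]
      · simp [c1]

end PBT
namespace PBT

open Classical in
theorem C2 : ∀ (T U : PBT), U.deg = T.deg + 1 →
    (∑ W ∈ allTrees (T.deg + 1), (if tamari U W then kk T W else 0))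
      = (-1 : ℚ) ^ T.deg * (if tamari (node leaf T) U then 1 else 0) := by
  intro T
  induction T with
  | leaf =>
    intro U hU
    have hUY : U = Y := deg_eq_one hU
    subst hUY
    have hsing : allTrees (deg leaf + 1) = {Y} := by
      apply Finset.eq_singleton_iff_unique_mem.mpr
      refine ⟨mem_allTrees.mpr rfl, fun x hx => ?_⟩
      have := mem_allTrees.mp hx
      exact deg_eq_one (by simpa [deg] using this)
    rw [hsing, Finset.sum_singleton]
    simp [kk, tamari_refl, Y, deg]
  | node A B ihA ihB =>
    intro U hU
    have hdT : (node A B).deg = A.deg + B.deg + 1 := rfl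
    have haU : A.deg + 1 ≤ U.deg := by omega
    have hsd := split_deg haU
    set ℓ := (split (A.deg + 1) U).1 with hℓ
    set r := (split (A.deg + 1) U).2 with hr
    have hℓd : ℓ.deg = A.deg + 1 := hsd.1
    have hrd : r.deg = B.deg + 1 := by rw [hr, hsd.2]; omega
    have hab : (node A B).deg + 1 = (A.deg + 1) + (B.deg + 1) := by omega
    have expand : ∀ W, (if tamari U W then kk (node A B) W else 0)
        = (if tamari U W then
            (if graftL (split (A.deg + 1) W).1 (split (A.deg + 1) W).2 = W
              then kk A (split (A.deg + 1) W).1 * kk B (split (A.deg + 1) W).2 else 0) else 0)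
        - (if tamari U W then
            (if graftR (split (A.deg + 1) W).1 (split (A.deg + 1) W).2 = W
              then kk A (split (A.deg + 1) W).1 * kk B (split (A.deg + 1) W).2 else 0) else 0) := by
      intro W
      rw [show kk (node A B) W
          = (if graftL (split (A.deg + 1) W).1 (split (A.deg + 1) W).2 = W
              then kk A (split (A.deg + 1) W).1 * kk B (split (A.deg + 1) W).2 else 0)
          - (if graftR (split (A.deg + 1) W).1 (split (A.deg + 1) W).2 = W
              then kk A (split (A.deg + 1) W).1 * kk B (split (A.deg + 1) W).2 else 0)
        from by rw [kk]]
      rw [ite_sub_ite]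
    rw [hab]
    calc ∑ W ∈ allTrees ((A.deg + 1) + (B.deg + 1)), (if tamari U W then kk (node A B) W else 0)
        = ∑ W ∈ allTrees ((A.deg + 1) + (B.deg + 1)),
            ((if tamari U W then
              (if graftL (split (A.deg + 1) W).1 (split (A.deg + 1) W).2 = W
                then kk A (split (A.deg + 1) W).1 * kk B (split (A.deg + 1) W).2 else 0) else 0)
            - (if tamari U W then
              (if graftR (split (A.deg + 1) W).1 (split (A.deg + 1) W).2 = W
                then kk A (split (A.deg + 1) W).1 * kk B (split (A.deg + 1) W).2 else 0) else 0)) := by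
          exact Finset.sum_congr rfl fun W _ => expand W
      _ = (∑ p ∈ allTrees (A.deg + 1) ×ˢ allTrees (B.deg + 1),
            (if tamari U (graftL p.1 p.2) then kk A p.1 * kk B p.2 else 0))
          - (∑ p ∈ allTrees (A.deg + 1) ×ˢ allTrees (B.deg + 1),
            (if tamari U (graftR p.1 p.2) then kk A p.1 * kk B p.2 else 0)) := by
          rw [Finset.sum_sub_distrib]
          congr 1
          · exact sum_decomp graftL (fun W₁ W₂ h => split_graftL W₂ h) deg_graftL
              (fun p => kk A p.1 * kk B p.2) (fun W => tamari U W)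
          · exact sum_decomp graftR (fun W₁ W₂ h => split_graftR W₂ h) deg_graftR
              (fun p => kk A p.1 * kk B p.2) (fun W => tamari U W)
      _ = (-1 : ℚ) ^ (node A B).deg * (if tamari (node leaf (node A B)) U then 1 else 0) := ?_
    have hsumR : (∑ p ∈ allTrees (A.deg + 1) ×ˢ allTrees (B.deg + 1),
          (if tamari U (graftR p.1 p.2) then kk A p.1 * kk B p.2 else 0))
        = ((-1 : ℚ) ^ A.deg * (if tamari (node leaf A) ℓ then 1 else 0))
          * ((-1 : ℚ) ^ B.deg * (if tamari (node leaf B) r then 1 else 0)) := by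
      rw [← ihA ℓ hℓd, ← ihB r hrd, Finset.sum_mul_sum, ← Finset.sum_product']
      refine Finset.sum_congr rfl fun p hp => ?_
      rw [Finset.mem_product] at hp
      have h1 : p.1.deg = A.deg + 1 := mem_allTrees.mp hp.1
      have h2 : p.2.deg = B.deg + 1 := mem_allTrees.mp hp.2
      have hM := M1 (S := p.1) (T := p.2) (U := U) (by omega)
      rw [h1] at hM
      rw [← hℓ, ← hr] at hM
      rw [if_congr hM rfl rfl]
      by_cases c1 : tamari ℓ p.1 <;> by_cases c2 : tamari r p.2 <;>
        simp [c1, c2, mul_comm, mul_left_comm, mul_assoc]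
    have hsumL : (∑ p ∈ allTrees (A.deg + 1) ×ˢ allTrees (B.deg + 1),
          (if tamari U (graftL p.1 p.2) then kk A p.1 * kk B p.2 else 0))
        = (if graftL ℓ r = U then 1 else 0) *
          (((-1 : ℚ) ^ A.deg * (if tamari (node leaf A) ℓ then 1 else 0))
            * ((-1 : ℚ) ^ B.deg * (if tamari (node leaf B) r then 1 else 0))) := by
      by_cases hE : graftL ℓ r = U
      · rw [if_pos hE, one_mul]
        rw [← ihA ℓ hℓd, ← ihB r hrd, Finset.sum_mul_sum, ← Finset.sum_product']
        refine Finset.sum_congr rfl fun p hp => ?_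
        rw [Finset.mem_product] at hp
        have h1 : p.1.deg = A.deg + 1 := mem_allTrees.mp hp.1
        have h2 : p.2.deg = B.deg + 1 := mem_allTrees.mp hp.2
        have hM := corL (W₁ := p.1) (W₂ := p.2) (U := U) (by omega)
        rw [h1] at hM
        rw [← hℓ, ← hr] at hM
        have hM2 : tamari U (graftL p.1 p.2) ↔ (tamari ℓ p.1 ∧ tamari r p.2) := by
          rw [hM]
          simp [hE]
        rw [if_congr hM2 rfl rfl]
        by_cases c1 : tamari ℓ p.1 <;> by_cases c2 : tamari r p.2 <;>
          simp [c1, c2, mul_comm, mul_left_comm, mul_assoc]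
      · rw [if_neg hE, zero_mul]
        refine Finset.sum_eq_zero fun p hp => ?_
        rw [Finset.mem_product] at hp
        have h1 : p.1.deg = A.deg + 1 := mem_allTrees.mp hp.1
        have h2 : p.2.deg = B.deg + 1 := mem_allTrees.mp hp.2
        have hM := corL (W₁ := p.1) (W₂ := p.2) (U := U) (by omega)
        rw [h1] at hM
        rw [← hℓ, ← hr] at hM
        rw [if_neg]
        rw [hM]
        tauto
    rw [hsumL, hsumR]
    have hE := lemE' (A := A) (B := B) (U := U) (by omega)
    have hpow : (-1 : ℚ) ^ (node A B).deg = -((-1 : ℚ) ^ A.deg * (-1 : ℚ) ^ B.deg) := by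
      rw [hdT, pow_succ, pow_add]
      ring
    by_cases hcond : tamari (node leaf (node A B)) U
    · obtain ⟨d1, d2, d3⟩ := hE.mp hcond
      rw [← hℓ] at d1
      rw [← hr] at d2
      rw [← hℓ, ← hr] at d3
      have hc3 : ¬ (graftL ℓ r = U) := fun hcc => d3 hcc.symm
      rw [if_pos hcond, if_pos d1, if_pos d2, if_neg hc3, hpow]
      ring
    · rw [if_neg hcond]
      by_cases c1 : tamari (node leaf A) ℓ
      · by_cases c2 : tamari (node leaf B) r
        · have hc3 : graftL ℓ r = U := by
            by_contra hc
            refine hcond (hE.mpr ⟨?_, ?_, fun hcc => hc hcc.symm⟩)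
            · rw [← hℓ]; exact c1
            · rw [← hr]; exact c2
          rw [if_pos c1, if_pos c2, if_pos hc3]
          ring
        · simp [c1, c2]
      · simp [c1]

end PBT
namespace PBT

/-! ### A strictly monotone statistic -/

def wt : PBT → ℕ
  | leaf => 0
  | node l r => wt l + wt r + deg r

theorem rot_wt {a b : PBT} (h : rot a b) : wt a < wt b := by
  induction h with
  | rotate A B C => simp [wt, deg]; omega
  | left T h ih => simp only [wt]; omega
  | right S h ih =>
    rename_i T T'
    have := rot_deg h
    simp only [wt]
    omega

theorem tamari_wt {a b : PBT} (h : tamari a b) : wt a ≤ wt b := by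
  induction h with
  | refl => exact le_refl _
  | tail _ h ih => exact ih.trans (rot_wt h).le

theorem tamari_wt_strict {a b : PBT} (h : tamari a b) (hne : a ≠ b) : wt a < wt b := by
  rcases Relation.ReflTransGen.cases_head h with rfl | ⟨c, hc, hcb⟩
  · exact absurd rfl hne
  · exact lt_of_lt_of_le (rot_wt hc) (tamari_wt hcb)

end PBT

open Classical in
theorem Lmat_det_isUnit (m : ℕ) [Fintype (PBTdeg m)] : IsUnit (Lmat m).det := by
  classical
  have hbt : (Lmat m).BlockTriangular (fun v => PBT.wt v.1) := by
    intro i j hij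
    simp only at hij
    have hnt : ¬ PBT.tamari i.1 j.1 := fun h => absurd (PBT.tamari_wt h) (by omega)
    simp [Lmat, hnt]
  rw [hbt.det]
  have hblocks : ∀ k ∈ Finset.image (fun v : PBTdeg m => PBT.wt v.1) Finset.univ,
      ((Lmat m).toSquareBlock (fun v => PBT.wt v.1) k).det = 1 := by
    intro k _
    have : (Lmat m).toSquareBlock (fun v => PBT.wt v.1) k = 1 := by
      ext i j
      by_cases hij : i = j
      · subst hij
        simp [Matrix.toSquareBlock, Matrix.toSquareBlockProp, Lmat, PBT.tamari_refl,
          Matrix.one_apply]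
      · have hne : i.1 ≠ j.1 := fun hc => hij (Subtype.ext hc)
        have hnt : ¬ PBT.tamari i.1.1 j.1.1 := by
          intro ht
          by_cases he : i.1.1 = j.1.1
          · exact hne (Subtype.ext he)
          · have := PBT.tamari_wt_strict ht he
            have hk1 : PBT.wt i.1.1 = k := i.2
            have hk2 : PBT.wt j.1.1 = k := j.2
            omega
        simp [Matrix.toSquareBlock, Matrix.toSquareBlockProp, Lmat, hnt,
          Matrix.one_apply, hij]
    rw [this, Matrix.det_one]
  rw [Finset.prod_congr rfl hblocks, Finset.prod_const_one]
  exact isUnit_one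
open Classical in
theorem sum_bridge {m : ℕ} [Fintype (PBTdeg m)] (f : PBT → ℚ) :
    ∑ x : PBTdeg m, f x.1 = ∑ W ∈ PBT.allTrees m, f W := by
  refine Finset.sum_bij (fun x _ => x.1) ?_ ?_ ?_ ?_
  · intro x _
    exact PBT.mem_allTrees.mpr x.2
  · intro x _ y _ h
    exact Subtype.ext h
  · intro W hW
    exact ⟨⟨W, PBT.mem_allTrees.mp hW⟩, Finset.mem_univ _, rfl⟩
  · intro x _
    rfl

section Assembly

variable (n : ℕ) [Fintype (PBTdeg n)] [Fintype (PBTdeg (n + 1))]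

open Classical

noncomputable def Pmat : Matrix (PBTdeg (n + 1)) (PBTdeg n) ℚ :=
  Matrix.of fun U T => if U.1 = PBT.node T.1 PBT.leaf then 1 else 0

noncomputable def Gmat : Matrix (PBTdeg (n + 1)) (PBTdeg n) ℚ :=
  Matrix.of fun U T => if U.1 = PBT.node PBT.leaf T.1 then 1 else 0

noncomputable def Kmat : Matrix (PBTdeg (n + 1)) (PBTdeg n) ℚ :=
  Matrix.of fun U T => PBT.kk T.1 U.1

theorem mat1 : (Lmat (n + 1)).transpose * Kmat n = Lmat (n + 1) * Pmat n := by
  ext U T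
  rw [Matrix.mul_apply, Matrix.mul_apply]
  have hTd : (PBT.node T.1 PBT.leaf).deg = n + 1 := by simp [PBT.deg, T.2]
  calc ∑ W : PBTdeg (n + 1), (Lmat (n + 1)).transpose U W * Kmat n W T
      = ∑ W : PBTdeg (n + 1),
          (if PBT.tamari W.1 U.1 then PBT.kk T.1 W.1 else 0) := by
        refine Finset.sum_congr rfl fun W _ => ?_
        simp only [Matrix.transpose_apply, Lmat, Kmat, Matrix.of_apply]
        split <;> simp
    _ = ∑ W ∈ PBT.allTrees (n + 1), (if PBT.tamari W U.1 then PBT.kk T.1 W else 0) :=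
        sum_bridge (m := n + 1) (fun W => if PBT.tamari W U.1 then PBT.kk T.1 W else 0)
    _ = ∑ W ∈ PBT.allTrees (T.1.deg + 1), (if PBT.tamari W U.1 then PBT.kk T.1 W else 0) := by
        rw [T.2]
    _ = (if PBT.tamari U.1 (PBT.node T.1 PBT.leaf) then 1 else 0) :=
        PBT.C1 T.1 U.1 (by rw [U.2, T.2])
    _ = ∑ W : PBTdeg (n + 1), Lmat (n + 1) U W * Pmat n W T := by
        rw [Finset.sum_eq_single (⟨PBT.node T.1 PBT.leaf, hTd⟩ : PBTdeg (n + 1))]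
        · simp [Lmat, Pmat]
        · intro W _ hW
          have : W.1 ≠ PBT.node T.1 PBT.leaf := fun hc => hW (Subtype.ext hc)
          simp [Pmat, this]
        · intro hc
          exact absurd (Finset.mem_univ _) hc

theorem mat2 : Lmat (n + 1) * Kmat n
    = ((-1 : ℚ) ^ n) • ((Lmat (n + 1)).transpose * Gmat n) := by
  ext U T
  rw [Matrix.smul_apply, Matrix.mul_apply, Matrix.mul_apply]
  have hTd : (PBT.node PBT.leaf T.1).deg = n + 1 := by simp [PBT.deg, T.2]
  calc ∑ W : PBTdeg (n + 1), Lmat (n + 1) U W * Kmat n W T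
      = ∑ W : PBTdeg (n + 1),
          (if PBT.tamari U.1 W.1 then PBT.kk T.1 W.1 else 0) := by
        refine Finset.sum_congr rfl fun W _ => ?_
        simp only [Lmat, Kmat, Matrix.of_apply]
        split <;> simp
    _ = ∑ W ∈ PBT.allTrees (n + 1), (if PBT.tamari U.1 W then PBT.kk T.1 W else 0) :=
        sum_bridge (m := n + 1) (fun W => if PBT.tamari U.1 W then PBT.kk T.1 W else 0)
    _ = ∑ W ∈ PBT.allTrees (T.1.deg + 1), (if PBT.tamari U.1 W then PBT.kk T.1 W else 0) := by
        rw [T.2]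
    _ = (-1 : ℚ) ^ T.1.deg * (if PBT.tamari (PBT.node PBT.leaf T.1) U.1 then 1 else 0) :=
        PBT.C2 T.1 U.1 (by rw [U.2, T.2])
    _ = (-1 : ℚ) ^ n * (if PBT.tamari (PBT.node PBT.leaf T.1) U.1 then 1 else 0) := by
        rw [T.2]
    _ = (-1 : ℚ) ^ n • ∑ W : PBTdeg (n + 1), (Lmat (n + 1)).transpose U W * Gmat n W T := by
        rw [Finset.sum_eq_single (⟨PBT.node PBT.leaf T.1, hTd⟩ : PBTdeg (n + 1))]
        · simp [Lmat, Gmat, smul_eq_mul]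
        · intro W _ hW
          have : W.1 ≠ PBT.node PBT.leaf T.1 := fun hc => hW (Subtype.ext hc)
          simp [Gmat, this]
        · intro hc
          exact absurd (Finset.mem_univ _) hc

theorem mat3 : Lmat (n + 1) * Pmat n = Pmat n * Lmat n := by
  ext U T
  rw [Matrix.mul_apply, Matrix.mul_apply]
  have hTd : (PBT.node T.1 PBT.leaf).deg = n + 1 := by simp [PBT.deg, T.2]
  have lhs_eq : ∑ W : PBTdeg (n + 1), Lmat (n + 1) U W * Pmat n W T
      = (if PBT.tamari U.1 (PBT.node T.1 PBT.leaf) then 1 else 0) := by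
    rw [Finset.sum_eq_single (⟨PBT.node T.1 PBT.leaf, hTd⟩ : PBTdeg (n + 1))]
    · simp [Lmat, Pmat]
    · intro W _ hW
      have : W.1 ≠ PBT.node T.1 PBT.leaf := fun hc => hW (Subtype.ext hc)
      simp [Pmat, this]
    · intro hc
      exact absurd (Finset.mem_univ _) hc
  rw [lhs_eq]
  by_cases hU : PBT.tamari U.1 (PBT.node T.1 PBT.leaf)
  · obtain ⟨T', hT', ht⟩ := PBT.cor1.mp hU
    have hT'd : T'.deg = n := by
      have h1 : U.1.deg = n + 1 := U.2
      rw [hT'] at h1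
      simpa [PBT.deg] using h1
    rw [if_pos hU, Finset.sum_eq_single (⟨T', hT'd⟩ : PBTdeg n)]
    · simp [Pmat, Lmat, hT', ht]
    · intro W _ hW
      have hne : T' ≠ W.1 := fun hc => hW (Subtype.ext hc.symm)
      have : U.1 ≠ PBT.node W.1 PBT.leaf := by
        rw [hT']
        intro hc
        injection hc with h1 h2
        exact hne h1
      simp [Pmat, this]
    · intro hc
      exact absurd (Finset.mem_univ _) hc
  · rw [if_neg hU]
    refine (Finset.sum_eq_zero fun W _ => ?_).symm
    by_cases hW : U.1 = PBT.node W.1 PBT.leaf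
    · have : ¬ PBT.tamari W.1 T.1 := by
        intro ht
        exact hU (PBT.cor1.mpr ⟨W.1, hW, ht⟩)
      simp [Pmat, Lmat, hW, this]
    · simp [Pmat, hW]

theorem mat4 : (Lmat (n + 1)).transpose * Gmat n = Gmat n * (Lmat n).transpose := by
  ext U T
  rw [Matrix.mul_apply, Matrix.mul_apply]
  have hTd : (PBT.node PBT.leaf T.1).deg = n + 1 := by simp [PBT.deg, T.2]
  have lhs_eq : ∑ W : PBTdeg (n + 1), (Lmat (n + 1)).transpose U W * Gmat n W T
      = (if PBT.tamari (PBT.node PBT.leaf T.1) U.1 then 1 else 0) := by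
    rw [Finset.sum_eq_single (⟨PBT.node PBT.leaf T.1, hTd⟩ : PBTdeg (n + 1))]
    · simp [Lmat, Gmat]
    · intro W _ hW
      have : W.1 ≠ PBT.node PBT.leaf T.1 := fun hc => hW (Subtype.ext hc)
      simp [Gmat, this]
    · intro hc
      exact absurd (Finset.mem_univ _) hc
  rw [lhs_eq]
  by_cases hU : PBT.tamari (PBT.node PBT.leaf T.1) U.1
  · obtain ⟨T', hT', ht⟩ := PBT.cor3.mp hU
    have hT'd : T'.deg = n := by
      have h1 : U.1.deg = n + 1 := U.2
      rw [hT'] at h1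
      simpa [PBT.deg] using h1
    rw [if_pos hU, Finset.sum_eq_single (⟨T', hT'd⟩ : PBTdeg n)]
    · simp [Gmat, Lmat, hT', ht]
    · intro W _ hW
      have hne : T' ≠ W.1 := fun hc => hW (Subtype.ext hc.symm)
      have : U.1 ≠ PBT.node PBT.leaf W.1 := by
        rw [hT']
        intro hc
        injection hc with h1 h2
        exact hne h2
      simp [Gmat, this]
    · intro hc
      exact absurd (Finset.mem_univ _) hc
  · rw [if_neg hU]
    refine (Finset.sum_eq_zero fun W _ => ?_).symm
    by_cases hW : U.1 = PBT.node PBT.leaf W.1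
    · have : ¬ PBT.tamari T.1 W.1 := by
        intro ht
        exact hU (PBT.cor3.mpr ⟨W.1, hW, ht⟩)
      simp [Gmat, Lmat, hW, this]
    · simp [Gmat, hW]

theorem key_identity :
    thetaMat (n + 1) * Pmat n = ((-1 : ℚ) ^ n) • (Gmat n * (thetaMat n)⁻¹) := by
  have hdet1 : IsUnit (Lmat (n + 1)).det := Lmat_det_isUnit (n + 1)
  have hdetT1 : IsUnit (Lmat (n + 1)).transpose.det := by
    rw [Matrix.det_transpose]; exact hdet1
  have hdet0 : IsUnit (Lmat n).det := Lmat_det_isUnit n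
  have hdetT0 : IsUnit (Lmat n).transpose.det := by
    rw [Matrix.det_transpose]; exact hdet0
  have hK : Kmat n = ((Lmat (n + 1)).transpose)⁻¹ * (Lmat (n + 1) * Pmat n) := by
    rw [← mat1, ← Matrix.mul_assoc, Matrix.nonsing_inv_mul _ hdetT1, Matrix.one_mul]
  have e1 : Lmat (n + 1) * ((Lmat (n + 1)).transpose)⁻¹ * (Pmat n * Lmat n)
      = ((-1 : ℚ) ^ n) • (Gmat n * (Lmat n).transpose) := by
    rw [← mat3 n, Matrix.mul_assoc, ← hK, mat2 n, mat4 n]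
  have e2 : Lmat (n + 1) * ((Lmat (n + 1)).transpose)⁻¹ * Pmat n
      = ((-1 : ℚ) ^ n) • (Gmat n * ((Lmat n).transpose * (Lmat n)⁻¹)) := by
    have e1' : Lmat (n + 1) * ((Lmat (n + 1)).transpose)⁻¹ * Pmat n * Lmat n * (Lmat n)⁻¹
        = (((-1 : ℚ) ^ n) • (Gmat n * (Lmat n).transpose)) * (Lmat n)⁻¹ := by
      rw [Matrix.mul_assoc (Lmat (n + 1) * ((Lmat (n + 1)).transpose)⁻¹) (Pmat n) (Lmat n), e1]
    rw [Matrix.mul_nonsing_inv_cancel_right _ _ hdet0] at e1'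
    rw [e1', Matrix.smul_mul, Matrix.mul_assoc]
  have hθinv : (thetaMat n)⁻¹ = -((Lmat n).transpose * (Lmat n)⁻¹) := by
    apply Matrix.inv_eq_right_inv
    show -(Lmat n * ((Lmat n).transpose)⁻¹) * -((Lmat n).transpose * (Lmat n)⁻¹) = 1
    rw [neg_mul_neg, Matrix.mul_assoc, ← Matrix.mul_assoc ((Lmat n).transpose)⁻¹,
      Matrix.nonsing_inv_mul _ hdetT0, Matrix.one_mul, Matrix.mul_nonsing_inv _ hdet0]
  rw [hθinv]
  show -(Lmat (n + 1) * ((Lmat (n + 1)).transpose)⁻¹) * Pmat n = _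
  rw [Matrix.neg_mul, e2, Matrix.mul_neg, smul_neg]

end Assembly
open Classical in
theorem Pmat_delta {n : ℕ} [Fintype (PBTdeg n)] [Fintype (PBTdeg (n + 1))]
    (T : PBT) (h : T.deg = n) :
    (Pmat n).mulVec (delta n T) = delta (n + 1) (PBT.node T PBT.leaf) := by
  funext U
  simp only [Matrix.mulVec, dotProduct]
  rw [Finset.sum_eq_single (⟨T, h⟩ : PBTdeg n)]
  · simp [Pmat, delta]
  · intro W _ hW
    have : W.1 ≠ T := fun hc => hW (Subtype.ext hc)
    simp [delta, this]
  · intro hc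
    exact absurd (Finset.mem_univ _) hc

open Classical in
theorem Gmat_mulVec {n : ℕ} [Fintype (PBTdeg n)] [Fintype (PBTdeg (n + 1))]
    (f : PBTdeg n → ℚ) :
    (Gmat n).mulVec f = Ygr n f := by
  funext U
  simp only [Matrix.mulVec, dotProduct, Ygr, Gmat, Matrix.of_apply]
  refine Finset.sum_congr rfl fun S _ => ?_
  rw [mul_comm]
  rfl
open PBT in
/-- `θ(T/Y) = (-1)ⁿ Y\θ⁻¹(T)` for every tree `T` of degree `n`. -/
theorem theta_graftL_Y (n : ℕ) [Fintype (PBTdeg n)] [Fintype (PBTdeg (n + 1))]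
    (T : PBT) (h : T.deg = n) :
    (thetaMat (n + 1)).mulVec (delta (n + 1) (graftL T Y)) =
      ((-1 : ℚ) ^ n) • Ygr n ((thetaMat n)⁻¹.mulVec (delta n T)) := by
  classical
  have hgy : graftL T Y = node T leaf := rfl
  calc (thetaMat (n + 1)).mulVec (delta (n + 1) (graftL T Y))
      = (thetaMat (n + 1)).mulVec ((Pmat n).mulVec (delta n T)) := by
        rw [Pmat_delta T h, hgy]
    _ = (thetaMat (n + 1) * Pmat n).mulVec (delta n T) := by
        rw [Matrix.mulVec_mulVec]
    _ = (((-1 : ℚ) ^ n) • (Gmat n * (thetaMat n)⁻¹)).mulVec (delta n T) := by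
        rw [key_identity]
    _ = ((-1 : ℚ) ^ n) • ((Gmat n * (thetaMat n)⁻¹).mulVec (delta n T)) := by
        rw [Matrix.smul_mulVec]
    _ = ((-1 : ℚ) ^ n) • ((Gmat n).mulVec ((thetaMat n)⁻¹.mulVec (delta n T))) := by
        rw [← Matrix.mulVec_mulVec]
    _ = ((-1 : ℚ) ^ n) • Ygr n ((thetaMat n)⁻¹.mulVec (delta n T)) := by
        rw [Gmat_mulVec]
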